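/- Let p be a prime number, Z_p the ring of p-adic integers, and Λ = Z_p[[S,T]] the formal power series ring in two variables S, T over Z_p. Let M be a finitely generated Λ-module such that the quotient module M/SM is generated by n elements as a Z_p-module. Then there exist power series g_0(S), g_1(S), …, g_{n−1}(S) in the subring Z_p[[S]] of Λ such that the element f(S,T) = T^n + g_{n−1}(S)·T^{n−1} + … + g_1(S)·T + g_0(S) of Λ annihilates M, i.e. f(S,T)·m = 0 for all m in M. -/

import Mathlib

open PowerSeries

namespace HBaux

variable {R : Type*} [CommRing R]

theorem coeff_C_mul_X_pow (a : R) (e d : ℕ) :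
    (PowerSeries.coeff (R := R) d) (PowerSeries.C (R := R) a * X ^ e) = if d = e then a else 0 := by
  rw [PowerSeries.coeff_C_mul, PowerSeries.coeff_X_pow]
  split <;> simp

theorem isNoetherianRing_powerSeries [IsNoetherianRing R] :
    IsNoetherianRing (PowerSeries R) := by
  rw [isNoetherianRing_iff_ideal_fg]
  intro I
  let J : ℕ →o Ideal R :=
    ⟨fun k => Submodule.map (PowerSeries.coeff (R := R) k)
        ((I ⊓ Ideal.span {(X : R⟦X⟧) ^ k}).restrictScalars R), by
      intro a b hab x hx
      obtain ⟨f, hf, rfl⟩ := hx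
      have hfI : f ∈ I := hf.1
      have hfd : (X : R⟦X⟧) ^ a ∣ f := Ideal.mem_span_singleton.mp hf.2
      refine ⟨X ^ (b - a) * f, ⟨I.mul_mem_left _ hfI, Ideal.mem_span_singleton.mpr ?_⟩, ?_⟩
      · calc (X : R⟦X⟧) ^ b = X ^ (b - a) * X ^ a := by
              rw [← pow_add]; congr 1; omega
          _ ∣ X ^ (b - a) * f := mul_dvd_mul_left _ hfd
      · have := PowerSeries.coeff_X_pow_mul f (b - a) a
        rw [show a + (b - a) = b by omega] at this
        exact this⟩
  obtain ⟨N, hN⟩ := monotone_stabilizes_iff_noetherian.mpr (inferInstance : IsNoetherian R R) J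
  have key : ∀ k : ℕ, ∃ (r : ℕ) (f : Fin r → R⟦X⟧),
      (∀ i, f i ∈ I ∧ (X : R⟦X⟧) ^ k ∣ f i) ∧
      J k = Submodule.span R (Set.range fun i => PowerSeries.coeff (R := R) k (f i)) := by
    intro k
    obtain ⟨r, s, hs⟩ := Submodule.fg_iff_exists_fin_generating_family.mp
      (IsNoetherian.noetherian (J k))
    have hex : ∀ i, ∃ f : R⟦X⟧, (f ∈ I ∧ (X : R⟦X⟧) ^ k ∣ f) ∧ PowerSeries.coeff (R := R) k f = s i := by
      intro i
      have hsi : s i ∈ J k := hs ▸ Submodule.subset_span ⟨i, rfl⟩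
      obtain ⟨f, hf, hcf⟩ := hsi
      exact ⟨f, ⟨hf.1, Ideal.mem_span_singleton.mp hf.2⟩, hcf⟩
    choose f hf hcf using hex
    exact ⟨r, f, hf, by rw [show (fun i => PowerSeries.coeff (R := R) k (f i)) = s from funext hcf, hs]⟩
  choose rk Fk hFk hJk using key
  set K : ℕ := (Finset.range (N + 1)).sup rk with hKdef
  have hK : ∀ k ≤ N, rk k ≤ K := fun k hk => Finset.le_sup (Finset.mem_range.mpr (by omega))
  set F : ℕ → Fin K → R⟦X⟧ := fun k i =>
    if h : (i : ℕ) < rk k then Fk k ⟨i, h⟩ else 0 with hFdef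
  have hFI : ∀ k i, F k i ∈ I := by
    intro k i
    rw [hFdef]; dsimp only; split
    · exact (hFk k _).1
    · exact I.zero_mem
  have hFdvd : ∀ k i, (X : R⟦X⟧) ^ k ∣ F k i := by
    intro k i
    rw [hFdef]; dsimp only; split
    · exact (hFk k _).2
    · exact dvd_zero _
  have hJK : ∀ k, k ≤ N →
      J k = Submodule.span R (Set.range fun i : Fin K => PowerSeries.coeff (R := R) k (F k i)) := by
    intro k hk
    rw [hJk k]
    apply le_antisymm
    · apply Submodule.span_le.mpr
      rintro _ ⟨i, rfl⟩
      apply Submodule.subset_span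
      refine ⟨⟨(i : ℕ), lt_of_lt_of_le i.isLt (hK k hk)⟩, ?_⟩
      rw [hFdef]; dsimp only
      rw [dif_pos (show ((⟨(i : ℕ), lt_of_lt_of_le i.isLt (hK k hk)⟩ : Fin K) : ℕ) < rk k from i.isLt)]
    · apply Submodule.span_le.mpr
      rintro _ ⟨i, rfl⟩
      rw [hFdef]; dsimp only; split
      · exact Submodule.subset_span ⟨_, rfl⟩
      · simp
  have hmemJ : ∀ (j : ℕ) (g : R⟦X⟧), g ∈ I → (X : R⟦X⟧) ^ j ∣ g →
      PowerSeries.coeff (R := R) j g ∈ J j :=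
    fun j g hg hd => ⟨g, ⟨hg, Ideal.mem_span_singleton.mpr hd⟩, rfl⟩
  have step : ∀ (j : ℕ) (g : R⟦X⟧), g ∈ I → (X : R⟦X⟧) ^ j ∣ g →
      ∃ c : Fin K → R,
        g - (∑ i, PowerSeries.C (R := R) (c i) * (X ^ (j - min j N) * F (min j N) i)) ∈ I ∧
        (X : R⟦X⟧) ^ (j + 1) ∣
          g - (∑ i, PowerSeries.C (R := R) (c i) * (X ^ (j - min j N) * F (min j N) i)) := by
    intro j g hg hd
    have h1 : PowerSeries.coeff (R := R) j g ∈ J (min j N) := by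
      rcases le_total j N with h | h
      · rw [min_eq_left h]
        exact hmemJ j g hg hd
      · rw [min_eq_right h, hN j h]
        exact hmemJ j g hg hd
    rw [hJK _ (min_le_right j N)] at h1
    obtain ⟨c, hc⟩ := (Submodule.mem_span_range_iff_exists_fun R).mp h1
    have hdvdsum : ∀ i : Fin K, (X : R⟦X⟧) ^ j ∣
        PowerSeries.C (R := R) (c i) * (X ^ (j - min j N) * F (min j N) i) := by
      intro i
      apply Dvd.dvd.mul_left
      calc (X : R⟦X⟧) ^ j = X ^ (j - min j N) * X ^ (min j N) := by
            rw [← pow_add]; congr 1; omega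
        _ ∣ X ^ (j - min j N) * F (min j N) i := mul_dvd_mul_left _ (hFdvd _ i)
    refine ⟨c, ?_, ?_⟩
    · exact I.sub_mem hg (Ideal.sum_mem _ fun i _ => I.mul_mem_left _ (I.mul_mem_left _ (hFI _ i)))
    · rw [X_pow_dvd_iff]
      intro d hdlt
      rw [map_sub]
      rcases Nat.lt_succ_iff_lt_or_eq.mp hdlt with hdj | rfl
      · have h2 : PowerSeries.coeff (R := R) d g = 0 := X_pow_dvd_iff.mp hd d hdj
        have h3 : PowerSeries.coeff (R := R) d
            (∑ i, PowerSeries.C (R := R) (c i) * (X ^ (j - min j N) * F (min j N) i)) = 0 :=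
          X_pow_dvd_iff.mp (Finset.dvd_sum fun i _ => hdvdsum i) d hdj
        rw [h2, h3, sub_zero]
      · have h4 : ∀ i : Fin K, PowerSeries.coeff (R := R) d
            (PowerSeries.C (R := R) (c i) * (X ^ (d - min d N) * F (min d N) i))
            = c i * PowerSeries.coeff (R := R) (min d N) (F (min d N) i) := by
          intro i
          rw [PowerSeries.coeff_C_mul]
          congr 1
          have := PowerSeries.coeff_X_pow_mul (F (min d N) i) (d - min d N) (min d N)
          rw [show min d N + (d - min d N) = d by omega] at this
          exact this
        rw [map_sum]
        simp only [h4]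
        rw [sub_eq_zero]
        rw [← hc]
        simp [smul_eq_mul]
  -- Skolemize the step
  choose cf hcf1 hcf2 using step
  -- the generating set
  have hfin : (⋃ k ∈ Set.Iic N, Set.range (F k)).Finite :=
    Set.Finite.biUnion (Set.finite_Iic N) fun k _ => Set.finite_range _
  apply Submodule.fg_def.mpr
  refine ⟨⋃ k ∈ Set.Iic N, Set.range (F k), hfin, le_antisymm ?_ ?_⟩
  · rw [Submodule.span_le]
    intro x hx
    simp only [Set.mem_iUnion, Set.mem_range] at hx
    obtain ⟨k, _, i, rfl⟩ := hx
    exact hFI k i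
  · intro g hg
    -- the recursive reduction sequence
    let seq : ∀ j : ℕ, {x : R⟦X⟧ // x ∈ I ∧ (X : R⟦X⟧) ^ j ∣ x} := fun j =>
      Nat.rec ⟨g, hg, by simpa using one_dvd g⟩
        (fun j ih =>
          ⟨ih.1 - ∑ i, PowerSeries.C (R := R) (cf j ih.1 ih.2.1 ih.2.2 i) *
              (X ^ (j - min j N) * F (min j N) i),
            hcf1 j ih.1 ih.2.1 ih.2.2, hcf2 j ih.1 ih.2.1 ih.2.2⟩) j
    let cc : ℕ → Fin K → R := fun j => cf j (seq j).1 (seq j).2.1 (seq j).2.2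
    have hseq : ∀ j, (seq (j + 1)).1 =
        (seq j).1 - ∑ i, PowerSeries.C (R := R) (cc j i) * (X ^ (j - min j N) * F (min j N) i) :=
      fun j => rfl
    have tele : ∀ j, g =
        (∑ t ∈ Finset.range j, ∑ i, PowerSeries.C (R := R) (cc t i) *
          (X ^ (t - min t N) * F (min t N) i)) + (seq j).1 := by
      intro j
      induction j with
      | zero => exact (zero_add g).symm
      | succ j ih =>
        rw [Finset.sum_range_succ, hseq j]
        conv_lhs => rw [ih]
        ring
    let Q : ℕ → Fin K → R⟦X⟧ := fun k i =>
      if k = N then PowerSeries.mk (fun d => cc (N + d) i) else PowerSeries.C (R := R) (cc k i)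
    have hQN : ∀ i, Q N i = PowerSeries.mk (fun d => cc (N + d) i) := fun i => if_pos rfl
    have hQlt : ∀ k, k ≠ N → ∀ i, Q k i = PowerSeries.C (R := R) (cc k i) := fun k hk i => if_neg hk
    have hdiffdvd : ∀ t : ℕ, (X : R⟦X⟧) ^ t ∣
        g - ∑ k ∈ Finset.range (N + 1), ∑ i, Q k i * F k i := by
      intro t
      set j := N + 1 + t with hj
      have hsplit : (∑ u ∈ Finset.range j, ∑ i, PowerSeries.C (R := R) (cc u i) *
            (X ^ (u - min u N) * F (min u N) i))
          = (∑ u ∈ Finset.range (N + 1), ∑ i, PowerSeries.C (R := R) (cc u i) *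
              (X ^ (u - min u N) * F (min u N) i))
            + ∑ u ∈ Finset.Ico (N + 1) j, ∑ i, PowerSeries.C (R := R) (cc u i) *
              (X ^ (u - min u N) * F (min u N) i) := by
        rw [Finset.range_eq_Ico, Finset.range_eq_Ico]
        exact (Finset.sum_Ico_consecutive (M := R⟦X⟧) _ (Nat.zero_le _) (by omega : N + 1 ≤ j)).symm
      have hAQ : (∑ u ∈ Finset.range (N + 1), ∑ i, PowerSeries.C (R := R) (cc u i) *
              (X ^ (u - min u N) * F (min u N) i))
            - (∑ k ∈ Finset.range (N + 1), ∑ i, Q k i * F k i)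
          = ∑ i, (PowerSeries.C (R := R) (cc N i) - Q N i) * F N i := by
        rw [← Finset.sum_sub_distrib]
        rw [Finset.sum_eq_single_of_mem N (Finset.self_mem_range_succ N)]
        · rw [← Finset.sum_sub_distrib]
          apply Finset.sum_congr rfl
          intro i _
          rw [min_self, Nat.sub_self, pow_zero, one_mul, sub_mul]
        · intro k hk hkN
          have hkle : k ≤ N := by simp only [Finset.mem_range] at hk; omega
          simp only [hQlt k hkN, min_eq_left hkle, Nat.sub_self, pow_zero, one_mul, sub_self]
      have hB : (∑ u ∈ Finset.Ico (N + 1) j, ∑ i, PowerSeries.C (R := R) (cc u i) *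
            (X ^ (u - min u N) * F (min u N) i))
          = ∑ i : Fin K, (∑ e ∈ Finset.range t, PowerSeries.C (R := R) (cc (N + (e + 1)) i) * X ^ (e + 1))
              * F N i := by
        rw [Finset.sum_comm]
        apply Finset.sum_congr rfl
        intro i _
        rw [Finset.sum_mul, Finset.sum_Ico_eq_sum_range]
        rw [show N + 1 + t - (N + 1) = t by omega]
        apply Finset.sum_congr rfl
        intro e _
        rw [show min (N + 1 + e) N = N by omega, show N + 1 + e - N = e + 1 by omega,
          show N + 1 + e = N + (e + 1) by omega]
        ring
      have hPsum : (∑ i : Fin K,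
            ((∑ e ∈ Finset.range (t + 1), PowerSeries.C (R := R) (cc (N + e) i) * X ^ e) - Q N i)
              * F N i)
          = ((∑ u ∈ Finset.range (N + 1), ∑ i, PowerSeries.C (R := R) (cc u i) *
              (X ^ (u - min u N) * F (min u N) i))
            - (∑ k ∈ Finset.range (N + 1), ∑ i, Q k i * F k i))
            + ∑ u ∈ Finset.Ico (N + 1) j, ∑ i, PowerSeries.C (R := R) (cc u i) *
              (X ^ (u - min u N) * F (min u N) i) := by
        rw [hAQ, hB, ← Finset.sum_add_distrib]
        apply Finset.sum_congr rfl
        intro i _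
        rw [Finset.sum_range_succ']
        simp only [Nat.add_zero, pow_zero, mul_one]
        ring
      have hD : g - (∑ k ∈ Finset.range (N + 1), ∑ i, Q k i * F k i)
          = (∑ i : Fin K,
              ((∑ e ∈ Finset.range (t + 1), PowerSeries.C (R := R) (cc (N + e) i) * X ^ e) - Q N i)
                * F N i) + (seq j).1 := by
        conv_lhs => rw [tele j, hsplit]
        rw [hPsum]
        ring
      rw [hD]
      apply dvd_add
      · apply Finset.dvd_sum
        intro i _
        have h5 : (X : R⟦X⟧) ^ (t + 1) ∣
            (∑ e ∈ Finset.range (t + 1), PowerSeries.C (R := R) (cc (N + e) i) * X ^ e) - Q N i := by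
          rw [X_pow_dvd_iff]
          intro d hd
          rw [map_sub, map_sum]
          simp only [coeff_C_mul_X_pow]
          rw [Finset.sum_ite_eq (Finset.range (t + 1)) d (fun e => cc (N + e) i),
            if_pos (Finset.mem_range.mpr hd), hQN, PowerSeries.coeff_mk, sub_self]
        exact dvd_trans (pow_dvd_pow X (Nat.le_succ t)) (h5.mul_right _)
      · exact dvd_trans (pow_dvd_pow X (by omega : t ≤ j)) (seq j).2.2
    have hg0 : g = ∑ k ∈ Finset.range (N + 1), ∑ i, Q k i * F k i := by
      have hz : g - (∑ k ∈ Finset.range (N + 1), ∑ i, Q k i * F k i) = 0 := by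
        ext d
        have := X_pow_dvd_iff.mp (hdiffdvd (d + 1)) d (Nat.lt_succ_self d)
        simpa using this
      exact sub_eq_zero.mp hz
    rw [hg0]
    apply Submodule.sum_mem
    intro k hk
    apply Submodule.sum_mem
    intro i _
    refine Ideal.mul_mem_left _ _ (Submodule.subset_span ?_)
    refine Set.mem_biUnion (show k ∈ Set.Iic N by
      simp only [Finset.mem_range] at hk
      simp only [Set.mem_Iic]
      omega) ⟨i, rfl⟩

end HBaux

/-- `Λ = ℤ_p[[S,T]]`, realized as the iterated power series ring `(ℤ_p[[S]])[[T]]`. -/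
noncomputable abbrev Lambda (p : ℕ) [Fact p.Prime] : Type := PowerSeries (PowerSeries ℤ_[p])

/-- The variable `S` of `Λ`: the inner power-series variable, embedded via `C`. -/
noncomputable abbrev Svar (p : ℕ) [Fact p.Prime] : Lambda p :=
  PowerSeries.C (R := PowerSeries ℤ_[p]) PowerSeries.X

/-- The variable `T` of `Λ`: the outer power-series variable. -/
noncomputable abbrev Tvar (p : ℕ) [Fact p.Prime] : Lambda p := PowerSeries.X

set_option maxHeartbeats 1000000 in
set_option synthInstance.maxHeartbeats 400000 in
/-- If `M` is a finitely generated `Λ`-module such that `M/SM` is generated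
by `n` elements as a `ℤ_p`-module, then there are `g₀, …, g_{n-1} ∈ ℤ_p[[S]]` such that
`f(S,T) = Tⁿ + g_{n-1}(S)·T^{n-1} + ⋯ + g₀(S)` annihilates `M`. -/
theorem annihilator_of_fg_quotient (p : ℕ) [Fact p.Prime] (n : ℕ)
    (M : Type*) [AddCommGroup M] [Module (Lambda p) M]
    [Module ℤ_[p] M] [IsScalarTower ℤ_[p] (Lambda p) M]
    [Module.Finite (Lambda p) M]
    (v : Fin n → (M ⧸ ((Ideal.span {Svar p}) • (⊤ : Submodule (Lambda p) M))))
    (hv : Submodule.span ℤ_[p] (Set.range v) = ⊤) :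
    ∃ g : Fin n → PowerSeries ℤ_[p],
      ∀ m : M,
        ((Tvar p) ^ n
            + ∑ i : Fin n, PowerSeries.C (R := PowerSeries ℤ_[p]) (g i) * (Tvar p) ^ (i : ℕ)) • m
          = 0 := by

  classical
  haveI hNoeth1 : IsNoetherianRing (PowerSeries ℤ_[p]) := HBaux.isNoetherianRing_powerSeries
  haveI hNoeth2 : IsNoetherianRing (Lambda p) := HBaux.isNoetherianRing_powerSeries
  have hXnonunit : ¬ IsUnit (X : PowerSeries ℤ_[p]) := by
    rw [PowerSeries.isUnit_iff_constantCoeff, PowerSeries.constantCoeff_X]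
    exact not_isUnit_zero
  have hSnonunit : ¬ IsUnit (Svar p) := by
    rw [PowerSeries.isUnit_iff_constantCoeff, PowerSeries.constantCoeff_C]
    exact hXnonunit
  have hStop : Ideal.span {Svar p} ≠ ⊤ := by
    rw [Ne, Ideal.span_singleton_eq_top]
    exact hSnonunit
  choose m hm using fun i => Submodule.Quotient.mk_surjective
    ((Ideal.span {Svar p}) • (⊤ : Submodule (Lambda p) M)) (v i)
  -- Claim A : every element is a Z_p-combination of the lifts modulo S•M
  have claimA : ∀ x : M, ∃ (c : Fin n → ℤ_[p]) (y : M),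
      x = (∑ i, (PowerSeries.C (R := PowerSeries ℤ_[p]) (PowerSeries.C (R := ℤ_[p]) (c i))) • m i)
        + Svar p • y := by
    intro x
    have hx : Submodule.Quotient.mk x ∈ Submodule.span ℤ_[p] (Set.range v) := by
      rw [hv]; exact Submodule.mem_top
    obtain ⟨c, hc⟩ := (Submodule.mem_span_range_iff_exists_fun ℤ_[p]).mp hx
    have hmem : x - ∑ i, c i • m i
        ∈ (Ideal.span {Svar p}) • (⊤ : Submodule (Lambda p) M) := by
      rw [← Submodule.Quotient.mk_eq_zero, ← Submodule.mkQ_apply, map_sub, map_sum]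
      have heach : ∀ i ∈ Finset.univ,
          ((Ideal.span {Svar p}) • (⊤ : Submodule (Lambda p) M)).mkQ (c i • m i) = c i • v i :=
        fun i _ => by
        rw [Submodule.mkQ_apply, Submodule.Quotient.mk_smul, hm i]
      rw [Finset.sum_congr rfl heach, Submodule.mkQ_apply, ← hc, sub_self]
    rw [Submodule.ideal_span_singleton_smul, ← SetLike.mem_coe,
      Submodule.coe_pointwise_smul] at hmem
    obtain ⟨y, -, hy⟩ := Set.mem_smul_set.mp hmem
    refine ⟨c, y, ?_⟩
    have hsm : ∀ i, (PowerSeries.C (R := PowerSeries ℤ_[p]) (PowerSeries.C (R := ℤ_[p]) (c i))) • m i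
        = c i • m i := by
      intro i
      rw [← IsScalarTower.algebraMap_smul (Lambda p) (c i) (m i)]
      congr 1
      simp [PowerSeries.algebraMap_apply]
    rw [Finset.sum_congr rfl fun i _ => hsm i, hy]
    abel
  choose ca ya hA using claimA
  -- Claim B : every element is a Z_p[[S]]-combination of the lifts
  have claimB : ∀ x : M, ∃ g : Fin n → PowerSeries ℤ_[p],
      x = ∑ i, (PowerSeries.C (R := PowerSeries ℤ_[p]) (g i)) • m i := by
    intro x
    set sq : ℕ → M := fun k => ya^[k] x with hsqdef
    set cc : ℕ → Fin n → ℤ_[p] := fun k => ca (sq k) with hccdef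
    have hsq : ∀ k, sq k = (∑ i, (PowerSeries.C (R := PowerSeries ℤ_[p])
        (PowerSeries.C (R := ℤ_[p]) (cc k i))) • m i) + Svar p • sq (k + 1) := by
      intro k
      have h1 : sq (k + 1) = ya (sq k) := by
        rw [hsqdef]
        exact Function.iterate_succ_apply' ya k x
      rw [h1]
      exact hA (sq k)
    set Pk : ℕ → Fin n → PowerSeries ℤ_[p] := fun k i =>
      ∑ j ∈ Finset.range k, PowerSeries.C (R := ℤ_[p]) (cc j i) * X ^ j with hPkdef
    have tele : ∀ k, x = (∑ i, (PowerSeries.C (R := PowerSeries ℤ_[p]) (Pk k i)) • m i)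
        + (Svar p) ^ k • sq k := by
      intro k
      induction k with
      | zero => simp [hPkdef, hsqdef]
      | succ k ih =>
        rw [ih, hsq k]
        rw [smul_add, Finset.smul_sum]
        have h2 : ∀ i, (Svar p) ^ k • (PowerSeries.C (R := PowerSeries ℤ_[p])
            (PowerSeries.C (R := ℤ_[p]) (cc k i))) • m i
            = (PowerSeries.C (R := PowerSeries ℤ_[p]) (PowerSeries.C (R := ℤ_[p]) (cc k i) * X ^ k)) • m i := by
          intro i
          rw [smul_smul]
          congr 1
          rw [show (Svar p) ^ k = PowerSeries.C (R := PowerSeries ℤ_[p]) (X ^ k) from (map_pow _ _ _).symm,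
            ← map_mul]
          congr 1
          ring
        rw [Finset.sum_congr rfl fun i _ => h2 i]
        have h3 : ∀ i, PowerSeries.C (R := PowerSeries ℤ_[p]) (Pk (k + 1) i)
            = PowerSeries.C (R := PowerSeries ℤ_[p]) (Pk k i)
              + PowerSeries.C (R := PowerSeries ℤ_[p]) (PowerSeries.C (R := ℤ_[p]) (cc k i) * X ^ k) := by
          intro i
          rw [← map_add]
          congr 1
          rw [hPkdef]
          exact Finset.sum_range_succ _ k
        rw [Finset.sum_congr rfl fun i _ => congrArg (· • m i) (h3 i)]
        simp only [add_smul, Finset.sum_add_distrib, smul_smul, ← pow_succ]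
        abel
    refine ⟨fun i => PowerSeries.mk (fun j => cc j i), ?_⟩
    have hdvdPk : ∀ k i, (X : PowerSeries ℤ_[p]) ^ k ∣
        Pk k i - PowerSeries.mk (fun j => cc j i) := by
      intro k i
      rw [X_pow_dvd_iff]
      intro d hd
      rw [map_sub, hPkdef]
      simp only [map_sum, HBaux.coeff_C_mul_X_pow]
      rw [Finset.sum_ite_eq (Finset.range k) d (fun j => cc j i),
        if_pos (Finset.mem_range.mpr hd), PowerSeries.coeff_mk, sub_self]
    have hinter : x - (∑ i, (PowerSeries.C (R := PowerSeries ℤ_[p])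
          (PowerSeries.mk (fun j => cc j i))) • m i)
        ∈ ⨅ k : ℕ, (Ideal.span {Svar p}) ^ k • (⊤ : Submodule (Lambda p) M) := by
      rw [Submodule.mem_iInf]
      intro k
      have h4 : x - (∑ i, (PowerSeries.C (R := PowerSeries ℤ_[p])
            (PowerSeries.mk (fun j => cc j i))) • m i)
          = (Svar p) ^ k • sq k + ∑ i, (PowerSeries.C (R := PowerSeries ℤ_[p])
              (Pk k i - PowerSeries.mk (fun j => cc j i))) • m i := by
        conv_lhs => rw [tele k]
        simp only [map_sub, sub_smul, Finset.sum_sub_distrib]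
        abel
      rw [h4]
      apply Submodule.add_mem
      · exact Submodule.smul_mem_smul (Ideal.pow_mem_pow (Ideal.mem_span_singleton_self _) k)
          Submodule.mem_top
      · apply Submodule.sum_mem
        intro i _
        apply Submodule.smul_mem_smul _ Submodule.mem_top
        rw [Ideal.span_singleton_pow, Ideal.mem_span_singleton]
        rw [show (Svar p) ^ k = PowerSeries.C (R := PowerSeries ℤ_[p]) (X ^ k) from (map_pow _ _ _).symm]
        exact map_dvd _ (hdvdPk k i)
    -- transfer to a `Type 0` model of `M` to apply Krull's intersection theorem
    obtain ⟨r, q, hq⟩ := Module.Finite.exists_fin' (Lambda p) M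
    let N₀ := (Fin r → Lambda p) ⧸ LinearMap.ker q
    let e : N₀ ≃ₗ[Lambda p] M := q.quotKerEquivOfSurjective hq
    haveI : Module.Finite (Lambda p) N₀ :=
      Module.Finite.of_surjective (LinearMap.ker q).mkQ (Submodule.Quotient.mk_surjective _)
    rw [Submodule.mem_iInf] at hinter
    have hz0 : e.symm (x - (∑ i, (PowerSeries.C (R := PowerSeries ℤ_[p])
          (PowerSeries.mk (fun j => cc j i))) • m i))
        ∈ ⨅ k : ℕ, (Ideal.span {Svar p}) ^ k • (⊤ : Submodule (Lambda p) N₀) := by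
      rw [Submodule.mem_iInf]
      intro k
      have h9 : Submodule.map (e : N₀ →ₗ[Lambda p] M)
            ((Ideal.span {Svar p}) ^ k • (⊤ : Submodule (Lambda p) N₀))
          = (Ideal.span {Svar p}) ^ k • (⊤ : Submodule (Lambda p) M) := by
        rw [Submodule.map_smul'', Submodule.map_top, LinearEquiv.range]
      have h10 : x - (∑ i, (PowerSeries.C (R := PowerSeries ℤ_[p])
            (PowerSeries.mk (fun j => cc j i))) • m i)
          ∈ Submodule.map (e : N₀ →ₗ[Lambda p] M)
            ((Ideal.span {Svar p}) ^ k • (⊤ : Submodule (Lambda p) N₀)) := by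
        rw [h9]; exact hinter k
      exact (Submodule.mem_map_equiv _).mp h10
    rw [Ideal.iInf_pow_smul_eq_bot_of_isLocalRing
        (I := (Ideal.span {Svar p} : Ideal (Lambda p))) (M := N₀) hStop,
      Submodule.mem_bot] at hz0
    have hzz : x - (∑ i, (PowerSeries.C (R := PowerSeries ℤ_[p])
        (PowerSeries.mk (fun j => cc j i))) • m i) = 0 := by
      calc x - (∑ i, (PowerSeries.C (R := PowerSeries ℤ_[p])
            (PowerSeries.mk (fun j => cc j i))) • m i)
          = e (e.symm (x - (∑ i, (PowerSeries.C (R := PowerSeries ℤ_[p])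
              (PowerSeries.mk (fun j => cc j i))) • m i))) := (e.apply_symm_apply _).symm
        _ = e 0 := by rw [hz0]
        _ = 0 := map_zero e
    rw [sub_eq_zero] at hzz
    exact hzz
  -- the matrix of the T-action on the lifts
  choose a ha using fun j => claimB (Tvar p • m j)
  set A : Matrix (Fin n) (Fin n) (PowerSeries ℤ_[p]) := Matrix.of a with hAdef
  set φ : Polynomial (PowerSeries ℤ_[p]) →+* Lambda p :=
    Polynomial.eval₂RingHom (PowerSeries.C (R := PowerSeries ℤ_[p])) (Tvar p) with hφdef
  set D : Matrix (Fin n) (Fin n) (Lambda p) := (Matrix.charmatrix A).map φ with hDdef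
  have hD : ∀ j i, D j i = (if j = i then Tvar p else 0)
      - PowerSeries.C (R := PowerSeries ℤ_[p]) (a j i) := by
    intro j i
    rw [hDdef, Matrix.map_apply, Matrix.charmatrix_apply, map_sub]
    congr 1
    · rw [Matrix.diagonal_apply]
      split <;> simp [hφdef]
    · simp [hφdef, hAdef]
  have hrel : ∀ j, ∑ i, D j i • m i = 0 := by
    intro j
    have h5 : ∀ i, D j i • m i = (if j = i then Tvar p • m i else 0)
        - (PowerSeries.C (R := PowerSeries ℤ_[p]) (a j i)) • m i := by
      intro i
      rw [hD j i, sub_smul, ite_smul, zero_smul]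
    simp only [h5, Finset.sum_sub_distrib, Finset.sum_ite_eq, Finset.mem_univ, if_true]
    rw [← ha j, sub_self]
  have hdm : ∀ jj, D.det • m jj = 0 := by
    intro jj
    calc D.det • m jj
        = ∑ i, ((D.det • (1 : Matrix (Fin n) (Fin n) (Lambda p))) jj i) • m i := by
          simp only [Matrix.smul_apply, Matrix.one_apply, smul_eq_mul, mul_ite, mul_one, mul_zero,
            ite_smul, zero_smul, Finset.sum_ite_eq, Finset.mem_univ, if_true]
      _ = ∑ i, ((D.adjugate * D) jj i) • m i := by rw [Matrix.adjugate_mul]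
      _ = ∑ i, ∑ l, (D.adjugate jj l * D l i) • m i := by
          simp only [Matrix.mul_apply, Finset.sum_smul]
      _ = ∑ l, D.adjugate jj l • (∑ i, D l i • m i) := by
          rw [Finset.sum_comm]
          simp only [Finset.smul_sum, mul_smul]
      _ = 0 := by simp [hrel]
  have hann : ∀ x : M, D.det • x = 0 := by
    intro x
    obtain ⟨g, hg⟩ := claimB x
    rw [hg, Finset.smul_sum]
    have h6 : ∀ i, D.det • (PowerSeries.C (R := PowerSeries ℤ_[p]) (g i)) • m i = 0 := fun i => by
      rw [smul_comm, hdm, smul_zero]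
    simp only [h6, Finset.sum_const_zero]
  have hdetD : D.det = φ A.charpoly := by
    rw [hDdef]
    exact (RingHom.map_det φ (Matrix.charmatrix A)).symm
  have hdeg : A.charpoly.natDegree = n := by
    rw [Matrix.charpoly_natDegree_eq_dim, Fintype.card_fin]
  have hexp : φ A.charpoly = (Tvar p) ^ n
      + ∑ i : Fin n, PowerSeries.C (R := PowerSeries ℤ_[p]) (A.charpoly.coeff i) * (Tvar p) ^ (i : ℕ) := by
    rw [hφdef, Polynomial.coe_eval₂RingHom, Polynomial.eval₂_eq_sum_range, hdeg,
      Finset.sum_range_succ]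
    have hlead : A.charpoly.coeff n = 1 := by
      have := (Matrix.charpoly_monic A).coeff_natDegree
      rwa [hdeg] at this
    rw [hlead, map_one, one_mul, add_comm]
    congr 1
    exact (Fin.sum_univ_eq_sum_range _ n).symm
  refine ⟨fun i => A.charpoly.coeff i, ?_⟩
  intro x
  rw [← hexp, ← hdetD]
  exact hann x
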